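/- Fix an integer m ≥ 2, a real h > 0 and a real A. For all periodic grid functions φ, ψ : (ZMod m) × (ZMod m) → ℝ, the map t ↦ H_h(φ + t·ψ) from ℝ to ℝ is differentiable at t = 0 with derivative ⟨δH_h(φ), ψ⟩₂, where δH_h(φ) = 4Aφ³ − 4A(𝔡ₓ(w·𝔇ₓφ) + 𝔡_y(w·𝔇_yφ)) + 6φ·𝔄(w) − 6(𝔡ₓ(𝔞(φ²)·𝔇ₓφ) + 𝔡_y(𝔞(φ²)·𝔇_yφ)) and w = (𝔇ₓφ)² + (𝔇_yφ)² (all operations on grid functions taken pointwise). -/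

import Mathlib

/-- Center-to-vertex difference in the x direction: the vertex indexed `(i,j)`
represents the point `(i+1/2, j+1/2)`. -/
noncomputable def Dx (m : ℕ) [NeZero m] (h : ℝ)
    (u : ZMod m × ZMod m → ℝ) : ZMod m × ZMod m → ℝ :=
  fun p => (u (p.1 + 1, p.2 + 1) - u (p.1, p.2 + 1) + u (p.1 + 1, p.2) - u p) / (2 * h)

/-- Center-to-vertex difference in the y direction. -/
noncomputable def Dy (m : ℕ) [NeZero m] (h : ℝ)
    (u : ZMod m × ZMod m → ℝ) : ZMod m × ZMod m → ℝ :=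
  fun p => (u (p.1 + 1, p.2 + 1) - u (p.1 + 1, p.2) + u (p.1, p.2 + 1) - u p) / (2 * h)

/-- Vertex-to-center difference in the x direction. -/
noncomputable def dx (m : ℕ) [NeZero m] (h : ℝ)
    (ν : ZMod m × ZMod m → ℝ) : ZMod m × ZMod m → ℝ :=
  fun p => (ν p - ν (p.1 - 1, p.2) + ν (p.1, p.2 - 1) - ν (p.1 - 1, p.2 - 1)) / (2 * h)

/-- Vertex-to-center difference in the y direction. -/
noncomputable def dy (m : ℕ) [NeZero m] (h : ℝ)
    (ν : ZMod m × ZMod m → ℝ) : ZMod m × ZMod m → ℝ :=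
  fun p => (ν p - ν (p.1, p.2 - 1) + ν (p.1 - 1, p.2) - ν (p.1 - 1, p.2 - 1)) / (2 * h)

/-- Vertex-to-center average. -/
noncomputable def Av (m : ℕ) [NeZero m]
    (ν : ZMod m × ZMod m → ℝ) : ZMod m × ZMod m → ℝ :=
  fun p => (ν p + ν (p.1 - 1, p.2) + ν (p.1, p.2 - 1) + ν (p.1 - 1, p.2 - 1)) / 4

/-- Center-to-vertex average. -/
noncomputable def av (m : ℕ) [NeZero m]
    (u : ZMod m × ZMod m → ℝ) : ZMod m × ZMod m → ℝ :=
  fun p => (u p + u (p.1 + 1, p.2) + u (p.1, p.2 + 1) + u (p.1 + 1, p.2 + 1)) / 4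

/-- The grid inner product `⟨u,v⟩₂ = h² Σ u v`. -/
noncomputable def gridInner (m : ℕ) [NeZero m] (h : ℝ)
    (u v : ZMod m × ZMod m → ℝ) : ℝ :=
  h ^ 2 * ∑ p : ZMod m × ZMod m, u p * v p

/-- The discrete energy `H_h`. -/
noncomputable def Hh (m : ℕ) [NeZero m] (h A : ℝ)
    (φ : ZMod m × ZMod m → ℝ) : ℝ :=
  A * h ^ 2 * ∑ p : ZMod m × ZMod m, φ p ^ 4 +
    A * h ^ 2 * ∑ p : ZMod m × ZMod m, (Dx m h φ p ^ 2 + Dy m h φ p ^ 2) ^ 2 +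
    3 * h ^ 2 * ∑ p : ZMod m × ZMod m,
      φ p ^ 2 * Av m (fun q => Dx m h φ q ^ 2 + Dy m h φ q ^ 2) p

/-- The first variational derivative `δH_h` of the discrete energy `H_h`. -/
noncomputable def deltaHh (m : ℕ) [NeZero m] (h A : ℝ)
    (φ : ZMod m × ZMod m → ℝ) : ZMod m × ZMod m → ℝ :=
  fun p =>
    4 * A * φ p ^ 3 -
      4 * A * (dx m h (fun q => (Dx m h φ q ^ 2 + Dy m h φ q ^ 2) * Dx m h φ q) p +
        dy m h (fun q => (Dx m h φ q ^ 2 + Dy m h φ q ^ 2) * Dy m h φ q) p) +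
      6 * φ p * Av m (fun q => Dx m h φ q ^ 2 + Dy m h φ q ^ 2) p -
      6 * (dx m h (fun q => av m (fun r => φ r ^ 2) q * Dx m h φ q) p +
        dy m h (fun q => av m (fun r => φ r ^ 2) q * Dy m h φ q) p)

section AuxLemmas

lemma affine_hasDerivAt (a b : ℝ) : HasDerivAt (fun t : ℝ => a + t * b) b 0 := by
  simpa using ((hasDerivAt_id (0:ℝ)).mul_const b).const_add a

lemma sum_shift2 {m : ℕ} [NeZero m] (F : ZMod m × ZMod m → ℝ) (c1 c2 : ZMod m) :
    ∑ p : ZMod m × ZMod m, F (p.1 + c1, p.2 + c2) = ∑ p : ZMod m × ZMod m, F p :=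
  Fintype.sum_equiv (Equiv.addRight ((c1, c2) : ZMod m × ZMod m)) _ _ (fun _ => rfl)

lemma shiftc {m : ℕ} [NeZero m] (ν u : ZMod m × ZMod m → ℝ) (c1 c2 : ZMod m) :
    ∑ p : ZMod m × ZMod m, ν p * u (p.1 + c1, p.2 + c2)
      = ∑ p : ZMod m × ZMod m, ν (p.1 - c1, p.2 - c2) * u p := by
  rw [← sum_shift2 (fun p => ν (p.1 - c1, p.2 - c2) * u p) c1 c2]
  exact Finset.sum_congr rfl fun p _ => by simp

lemma shiftc' {m : ℕ} [NeZero m] (u ν : ZMod m × ZMod m → ℝ) (c1 c2 : ZMod m) :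
    ∑ p : ZMod m × ZMod m, u p * ν (p.1 - c1, p.2 - c2)
      = ∑ p : ZMod m × ZMod m, u (p.1 + c1, p.2 + c2) * ν p := by
  rw [← sum_shift2 (fun p => u p * ν (p.1 - c1, p.2 - c2)) c1 c2]
  exact (Finset.sum_congr rfl fun p _ => by simp).symm

lemma sbp_x {m : ℕ} [NeZero m] (h : ℝ) (ν u : ZMod m × ZMod m → ℝ) :
    ∑ p : ZMod m × ZMod m, ν p * Dx m h u p
      = -∑ p : ZMod m × ZMod m, dx m h ν p * u p := by
  have e1 := shiftc ν u (1 : ZMod m) 1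
  have e2 := shiftc ν u (0 : ZMod m) 1
  have e3 := shiftc ν u (1 : ZMod m) 0
  simp only [add_zero, sub_zero] at e2 e3
  have key : ∀ p : ZMod m × ZMod m,
      ν p * Dx m h u p + dx m h ν p * u p =
        ((ν p * u (p.1 + 1, p.2 + 1) - ν (p.1 - 1, p.2 - 1) * u p)
          - (ν p * u (p.1, p.2 + 1) - ν (p.1, p.2 - 1) * u p)
          + (ν p * u (p.1 + 1, p.2) - ν (p.1 - 1, p.2) * u p)) / (2 * h) := by
    intro p; simp only [Dx, dx]; ring
  have hsum : ∑ p : ZMod m × ZMod m, (ν p * Dx m h u p + dx m h ν p * u p) = 0 := by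
    rw [Finset.sum_congr rfl fun p _ => key p, ← Finset.sum_div]
    simp only [Finset.sum_add_distrib, Finset.sum_sub_distrib, e1, e2, e3]
    ring
  rw [Finset.sum_add_distrib] at hsum
  linarith

lemma sbp_y {m : ℕ} [NeZero m] (h : ℝ) (ν u : ZMod m × ZMod m → ℝ) :
    ∑ p : ZMod m × ZMod m, ν p * Dy m h u p
      = -∑ p : ZMod m × ZMod m, dy m h ν p * u p := by
  have e1 := shiftc ν u (1 : ZMod m) 1
  have e2 := shiftc ν u (0 : ZMod m) 1
  have e3 := shiftc ν u (1 : ZMod m) 0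
  simp only [add_zero, sub_zero] at e2 e3
  have key : ∀ p : ZMod m × ZMod m,
      ν p * Dy m h u p + dy m h ν p * u p =
        ((ν p * u (p.1 + 1, p.2 + 1) - ν (p.1 - 1, p.2 - 1) * u p)
          - (ν p * u (p.1 + 1, p.2) - ν (p.1 - 1, p.2) * u p)
          + (ν p * u (p.1, p.2 + 1) - ν (p.1, p.2 - 1) * u p)) / (2 * h) := by
    intro p; simp only [Dy, dy]; ring
  have hsum : ∑ p : ZMod m × ZMod m, (ν p * Dy m h u p + dy m h ν p * u p) = 0 := by
    rw [Finset.sum_congr rfl fun p _ => key p, ← Finset.sum_div]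
    simp only [Finset.sum_add_distrib, Finset.sum_sub_distrib, e1, e2, e3]
    ring
  rw [Finset.sum_add_distrib] at hsum
  linarith

lemma avg_adj {m : ℕ} [NeZero m] (u ν : ZMod m × ZMod m → ℝ) :
    ∑ p : ZMod m × ZMod m, u p * Av m ν p
      = ∑ p : ZMod m × ZMod m, av m u p * ν p := by
  have e1 := shiftc' u ν (1 : ZMod m) 1
  have e2 := shiftc' u ν (0 : ZMod m) 1
  have e3 := shiftc' u ν (1 : ZMod m) 0
  simp only [add_zero, sub_zero] at e2 e3
  have key : ∀ p : ZMod m × ZMod m,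
      u p * Av m ν p - av m u p * ν p =
        ((u p * ν (p.1 - 1, p.2 - 1) - u (p.1 + 1, p.2 + 1) * ν p)
          + (u p * ν (p.1, p.2 - 1) - u (p.1, p.2 + 1) * ν p)
          + (u p * ν (p.1 - 1, p.2) - u (p.1 + 1, p.2) * ν p)) / 4 := by
    intro p; simp only [Av, av]; ring
  have hsum : ∑ p : ZMod m × ZMod m, (u p * Av m ν p - av m u p * ν p) = 0 := by
    rw [Finset.sum_congr rfl fun p _ => key p, ← Finset.sum_div]
    simp only [Finset.sum_add_distrib, Finset.sum_sub_distrib, e1, e2, e3]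
    ring
  rw [Finset.sum_sub_distrib] at hsum
  linarith

end AuxLemmas

lemma Dx_add_smul {m : ℕ} [NeZero m] (h : ℝ) (φ ψ : ZMod m × ZMod m → ℝ) (t : ℝ) :
    Dx m h (φ + t • ψ) = fun p => Dx m h φ p + t * Dx m h ψ p := by
  funext p; simp only [Dx, Pi.add_apply, Pi.smul_apply, smul_eq_mul]; ring

lemma Dy_add_smul {m : ℕ} [NeZero m] (h : ℝ) (φ ψ : ZMod m × ZMod m → ℝ) (t : ℝ) :
    Dy m h (φ + t • ψ) = fun p => Dy m h φ p + t * Dy m h ψ p := by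
  funext p; simp only [Dy, Pi.add_apply, Pi.smul_apply, smul_eq_mul]; ring

theorem Hh_first_variation (m : ℕ) [NeZero m] (hm : 2 ≤ m)
    (h : ℝ) (hh : 0 < h) (A : ℝ)
    (φ ψ : ZMod m × ZMod m → ℝ) :
    HasDerivAt (fun t : ℝ => Hh m h A (φ + t • ψ))
      (gridInner m h (deltaHh m h A φ) ψ) 0 := by
  have hfun : (fun t : ℝ => Hh m h A (φ + t • ψ)) = (fun t : ℝ =>
      A * h ^ 2 * ∑ p : ZMod m × ZMod m, (φ p + t * ψ p) ^ 4 +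
      A * h ^ 2 * ∑ p : ZMod m × ZMod m,
        ((Dx m h φ p + t * Dx m h ψ p) ^ 2 + (Dy m h φ p + t * Dy m h ψ p) ^ 2) ^ 2 +
      3 * h ^ 2 * ∑ p : ZMod m × ZMod m, (φ p + t * ψ p) ^ 2 *
        Av m (fun q => (Dx m h φ q + t * Dx m h ψ q) ^ 2
          + (Dy m h φ q + t * Dy m h ψ q) ^ 2) p) := by
    funext t
    simp only [Hh, Dx_add_smul, Dy_add_smul, Pi.add_apply, Pi.smul_apply, smul_eq_mul]
  rw [hfun]
  -- derivatives of the three sums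
  have H1 : HasDerivAt (fun t : ℝ => ∑ p : ZMod m × ZMod m, (φ p + t * ψ p) ^ 4)
      (∑ p : ZMod m × ZMod m, 4 * φ p ^ 3 * ψ p) 0 := by
    apply HasDerivAt.fun_sum; intro p _
    simpa using (affine_hasDerivAt (φ p) (ψ p)).fun_pow 4
  have hG : ∀ q : ZMod m × ZMod m, HasDerivAt
      (fun t : ℝ => (Dx m h φ q + t * Dx m h ψ q) ^ 2 + (Dy m h φ q + t * Dy m h ψ q) ^ 2)
      (2 * Dx m h φ q * Dx m h ψ q + 2 * Dy m h φ q * Dy m h ψ q) 0 := by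
    intro q
    simpa using ((affine_hasDerivAt (Dx m h φ q) (Dx m h ψ q)).fun_pow 2).fun_add
      ((affine_hasDerivAt (Dy m h φ q) (Dy m h ψ q)).fun_pow 2)
  have H2 : HasDerivAt (fun t : ℝ => ∑ p : ZMod m × ZMod m,
      ((Dx m h φ p + t * Dx m h ψ p) ^ 2 + (Dy m h φ p + t * Dy m h ψ p) ^ 2) ^ 2)
      (∑ p : ZMod m × ZMod m, 2 * (Dx m h φ p ^ 2 + Dy m h φ p ^ 2) *
        (2 * Dx m h φ p * Dx m h ψ p + 2 * Dy m h φ p * Dy m h ψ p)) 0 := by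
    apply HasDerivAt.fun_sum; intro p _
    simpa using (hG p).fun_pow 2
  have H3 : HasDerivAt (fun t : ℝ => ∑ p : ZMod m × ZMod m, (φ p + t * ψ p) ^ 2 *
      Av m (fun q => (Dx m h φ q + t * Dx m h ψ q) ^ 2
        + (Dy m h φ q + t * Dy m h ψ q) ^ 2) p)
      (∑ p : ZMod m × ZMod m,
        (2 * φ p * ψ p * Av m (fun q => Dx m h φ q ^ 2 + Dy m h φ q ^ 2) p
          + φ p ^ 2 * Av m (fun q => 2 * Dx m h φ q * Dx m h ψ q
            + 2 * Dy m h φ q * Dy m h ψ q) p)) 0 := by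
    apply HasDerivAt.fun_sum; intro p _
    have hAv : HasDerivAt (fun t : ℝ => Av m (fun q => (Dx m h φ q + t * Dx m h ψ q) ^ 2
        + (Dy m h φ q + t * Dy m h ψ q) ^ 2) p)
        (Av m (fun q => 2 * Dx m h φ q * Dx m h ψ q + 2 * Dy m h φ q * Dy m h ψ q) p) 0 := by
      simp only [Av]
      exact ((((hG p).add (hG (p.1 - 1, p.2))).add (hG (p.1, p.2 - 1))).add
        (hG (p.1 - 1, p.2 - 1))).div_const 4
    simpa using ((affine_hasDerivAt (φ p) (ψ p)).fun_pow 2).fun_mul hAv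
  have HD := ((H1.const_mul (A * h ^ 2)).fun_add (H2.const_mul (A * h ^ 2))).fun_add
    (H3.const_mul (3 * h ^ 2))
  refine HD.congr_deriv ?_
  symm
  -- it remains to identify the derivative value with the grid inner product
  -- summation by parts identities
  have sbx1 : ∑ p : ZMod m × ZMod m,
      (Dx m h φ p ^ 2 + Dy m h φ p ^ 2) * Dx m h φ p * Dx m h ψ p
      = -∑ p : ZMod m × ZMod m,
        dx m h (fun q => (Dx m h φ q ^ 2 + Dy m h φ q ^ 2) * Dx m h φ q) p * ψ p := by
    simpa using sbp_x h (fun q => (Dx m h φ q ^ 2 + Dy m h φ q ^ 2) * Dx m h φ q) ψ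
  have sby1 : ∑ p : ZMod m × ZMod m,
      (Dx m h φ p ^ 2 + Dy m h φ p ^ 2) * Dy m h φ p * Dy m h ψ p
      = -∑ p : ZMod m × ZMod m,
        dy m h (fun q => (Dx m h φ q ^ 2 + Dy m h φ q ^ 2) * Dy m h φ q) p * ψ p := by
    simpa using sbp_y h (fun q => (Dx m h φ q ^ 2 + Dy m h φ q ^ 2) * Dy m h φ q) ψ
  have sbx2 : ∑ p : ZMod m × ZMod m,
      av m (fun r => φ r ^ 2) p * Dx m h φ p * Dx m h ψ p
      = -∑ p : ZMod m × ZMod m,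
        dx m h (fun q => av m (fun r => φ r ^ 2) q * Dx m h φ q) p * ψ p := by
    simpa using sbp_x h (fun q => av m (fun r => φ r ^ 2) q * Dx m h φ q) ψ
  have sby2 : ∑ p : ZMod m × ZMod m,
      av m (fun r => φ r ^ 2) p * Dy m h φ p * Dy m h ψ p
      = -∑ p : ZMod m × ZMod m,
        dy m h (fun q => av m (fun r => φ r ^ 2) q * Dy m h φ q) p * ψ p := by
    simpa using sbp_y h (fun q => av m (fun r => φ r ^ 2) q * Dy m h φ q) ψ
  have hav : ∑ p : ZMod m × ZMod m, φ p ^ 2 * Av m (fun q => 2 * Dx m h φ q * Dx m h ψ q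
        + 2 * Dy m h φ q * Dy m h ψ q) p
      = ∑ p : ZMod m × ZMod m, av m (fun r => φ r ^ 2) p *
        (2 * Dx m h φ p * Dx m h ψ p + 2 * Dy m h φ p * Dy m h ψ p) := by
    simpa using avg_adj (fun r => φ r ^ 2)
      (fun q => 2 * Dx m h φ q * Dx m h ψ q + 2 * Dy m h φ q * Dy m h ψ q)
  -- split the sums into atomic pieces
  have split2 : ∑ p : ZMod m × ZMod m, 2 * (Dx m h φ p ^ 2 + Dy m h φ p ^ 2) *
        (2 * Dx m h φ p * Dx m h ψ p + 2 * Dy m h φ p * Dy m h ψ p)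
      = 4 * (∑ p : ZMod m × ZMod m,
          (Dx m h φ p ^ 2 + Dy m h φ p ^ 2) * Dx m h φ p * Dx m h ψ p)
        + 4 * (∑ p : ZMod m × ZMod m,
          (Dx m h φ p ^ 2 + Dy m h φ p ^ 2) * Dy m h φ p * Dy m h ψ p) := by
    rw [Finset.mul_sum, Finset.mul_sum, ← Finset.sum_add_distrib]
    exact Finset.sum_congr rfl fun p _ => by ring
  have split3 : ∑ p : ZMod m × ZMod m,
        (2 * φ p * ψ p * Av m (fun q => Dx m h φ q ^ 2 + Dy m h φ q ^ 2) p
          + φ p ^ 2 * Av m (fun q => 2 * Dx m h φ q * Dx m h ψ q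
            + 2 * Dy m h φ q * Dy m h ψ q) p)
      = 2 * (∑ p : ZMod m × ZMod m,
          φ p * Av m (fun q => Dx m h φ q ^ 2 + Dy m h φ q ^ 2) p * ψ p)
        + ∑ p : ZMod m × ZMod m, φ p ^ 2 * Av m (fun q => 2 * Dx m h φ q * Dx m h ψ q
            + 2 * Dy m h φ q * Dy m h ψ q) p := by
    rw [Finset.mul_sum, ← Finset.sum_add_distrib]
    exact Finset.sum_congr rfl fun p _ => by ring
  have splitav : ∑ p : ZMod m × ZMod m, av m (fun r => φ r ^ 2) p *
        (2 * Dx m h φ p * Dx m h ψ p + 2 * Dy m h φ p * Dy m h ψ p)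
      = 2 * (∑ p : ZMod m × ZMod m, av m (fun r => φ r ^ 2) p * Dx m h φ p * Dx m h ψ p)
        + 2 * (∑ p : ZMod m × ZMod m, av m (fun r => φ r ^ 2) p * Dy m h φ p * Dy m h ψ p) := by
    rw [Finset.mul_sum, Finset.mul_sum, ← Finset.sum_add_distrib]
    exact Finset.sum_congr rfl fun p _ => by ring
  have split1 : ∑ p : ZMod m × ZMod m, 4 * φ p ^ 3 * ψ p
      = 4 * ∑ p : ZMod m × ZMod m, φ p ^ 3 * ψ p := by
    rw [Finset.mul_sum]
    exact Finset.sum_congr rfl fun p _ => by ring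
  have hsplit : ∑ p : ZMod m × ZMod m, deltaHh m h A φ p * ψ p
      = 4 * A * (∑ p : ZMod m × ZMod m, φ p ^ 3 * ψ p)
        - 4 * A * (∑ p : ZMod m × ZMod m,
            dx m h (fun q => (Dx m h φ q ^ 2 + Dy m h φ q ^ 2) * Dx m h φ q) p * ψ p)
        - 4 * A * (∑ p : ZMod m × ZMod m,
            dy m h (fun q => (Dx m h φ q ^ 2 + Dy m h φ q ^ 2) * Dy m h φ q) p * ψ p)
        + 6 * (∑ p : ZMod m × ZMod m,
            φ p * Av m (fun q => Dx m h φ q ^ 2 + Dy m h φ q ^ 2) p * ψ p)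
        - 6 * (∑ p : ZMod m × ZMod m,
            dx m h (fun q => av m (fun r => φ r ^ 2) q * Dx m h φ q) p * ψ p)
        - 6 * (∑ p : ZMod m × ZMod m,
            dy m h (fun q => av m (fun r => φ r ^ 2) q * Dy m h φ q) p * ψ p) := by
    simp only [Finset.mul_sum]
    rw [← Finset.sum_sub_distrib, ← Finset.sum_sub_distrib, ← Finset.sum_add_distrib,
      ← Finset.sum_sub_distrib, ← Finset.sum_sub_distrib]
    exact Finset.sum_congr rfl fun p _ => by simp only [deltaHh]; ring
  rw [gridInner, hsplit, split1, split2, split3, hav, splitav, sbx1, sby1, sbx2, sby2]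
  ring
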